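/- Let G be an abelian group and η ∈ G^{n−1}. A sequence μ = (a_1,…,a_{n−1}) ∈ G^{n−1} is Jordan η-good for (UJ_n, η) — i.e. there exist strictly upper triangular matrix units r_1,…,r_{n−1}, homogeneous in (UJ_n, η) with deg r_k = a_k, whose left-normed Jordan product r_1 ∘ r_2 ∘ ⋯ ∘ r_{n−1} is nonzero — if and only if μ = ση for some σ ∈ 𝒯_{n−1}. -/

import Mathlib

open Matrix

/-- The submodule of upper triangular `n × n` matrices over `K`. -/
def UTs (K : Type*) [Field K] (n : ℕ) : Submodule K (Matrix (Fin n) (Fin n) K) where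
  carrier := {M | ∀ i j : Fin n, (j : ℕ) < (i : ℕ) → M i j = 0}
  add_mem' := by
    intro a b ha hb i j h
    simp [ha i j h, hb i j h]
  zero_mem' := by
    intro i j h
    simp
  smul_mem' := by
    intro c a ha i j h
    simp [ha i j h]

/-- `UJ K n` : the underlying space of the Jordan algebra of upper triangular matrices. -/
abbrev UJ (K : Type*) [Field K] (n : ℕ) : Type _ := ↥(UTs K n)

theorem mem_UTs {K : Type*} [Field K] {n : ℕ} {a : Matrix (Fin n) (Fin n) K} :
    a ∈ UTs K n ↔ ∀ i j : Fin n, (j : ℕ) < (i : ℕ) → a i j = 0 := Iff.rfl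

theorem UTs_mul_mem {K : Type*} [Field K] {n : ℕ} {a b : Matrix (Fin n) (Fin n) K}
    (ha : a ∈ UTs K n) (hb : b ∈ UTs K n) : a * b ∈ UTs K n := by
  rw [mem_UTs] at ha hb ⊢
  intro i j h
  rw [Matrix.mul_apply]
  apply Finset.sum_eq_zero
  intro k _
  rcases lt_or_ge (k : ℕ) (i : ℕ) with hk | hk
  · rw [ha i k hk, zero_mul]
  · rw [hb k j (lt_of_lt_of_le h hk), mul_zero]

/-- The Jordan product `x ∘ y = xy + yx` on upper triangular matrices. -/
def jmul {K : Type*} [Field K] {n : ℕ} (x y : UJ K n) : UJ K n :=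
  ⟨x.1 * y.1 + y.1 * x.1, (UTs K n).add_mem (UTs_mul_mem x.2 y.2) (UTs_mul_mem y.2 x.2)⟩

/-- The matrix unit `e_{ij}` (with `i ≤ j`) as an element of `UJ K n`. -/
def Eu (K : Type*) [Field K] {n : ℕ} (i j : Fin n) (h : i ≤ j) : UJ K n :=
  ⟨Matrix.single i j 1, by
    rw [mem_UTs]
    intro a b hab
    by_cases h1 : i = a ∧ j = b
    · exfalso
      rcases h1 with ⟨rfl, rfl⟩
      exact absurd hab (not_lt.mpr h)
    · simp only [Matrix.single, Matrix.of_apply, if_neg h1]⟩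

/-- `Y⁺_{i:m} = e_{i:m} + e_{−i:m}` (`0`-based index `i`, `i + m < n`). -/
def Yp (K : Type*) [Field K] {n : ℕ} (i m : ℕ) (h : i + m < n) : UJ K n :=
  Eu K ⟨i, by omega⟩ ⟨i + m, h⟩ (Fin.mk_le_mk.mpr (by omega)) +
  Eu K ⟨n - 1 - i - m, by omega⟩ ⟨n - 1 - i, by omega⟩ (Fin.mk_le_mk.mpr (by omega))

/-- `Y⁻_{i:m} = e_{i:m} − e_{−i:m}` (`0`-based index `i`, `i + m < n`). -/
def Ym (K : Type*) [Field K] {n : ℕ} (i m : ℕ) (h : i + m < n) : UJ K n :=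
  Eu K ⟨i, by omega⟩ ⟨i + m, h⟩ (Fin.mk_le_mk.mpr (by omega)) -
  Eu K ⟨n - 1 - i - m, by omega⟩ ⟨n - 1 - i, by omega⟩ (Fin.mk_le_mk.mpr (by omega))

/-- A `G`-grading on the Jordan algebra `UJ K n`: a direct sum decomposition into
`K`-subspaces `comp g` with `comp g ∘ comp h ⊆ comp (g * h)`. -/
structure UJGrading (K : Type*) [Field K] (n : ℕ) (G : Type*) [Group G] where
  comp : G → Submodule K (UJ K n)
  indep : iSupIndep comp
  sup_top : (⨆ g, comp g) = ⊤
  jmul_mem : ∀ (g h : G) (x y : UJ K n), x ∈ comp g → y ∈ comp h → jmul x y ∈ comp (g * h)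

/-- A graded isomorphism between two families of components: a bijective linear map
preserving the Jordan product and mapping each component onto the corresponding one. -/
def GradedIso {K : Type*} [Field K] {n : ℕ} {G : Type*} [Group G]
    (A A' : G → Submodule K (UJ K n)) : Prop :=
  ∃ ψ : UJ K n ≃ₗ[K] UJ K n,
    (∀ x y, ψ (jmul x y) = jmul (ψ x) (ψ y)) ∧
    ∀ g, (A g).map (ψ : UJ K n →ₗ[K] UJ K n) = A' g

/-- A family of components is elementary if every matrix unit is homogeneous. -/
def IsElementaryFam {K : Type*} [Field K] {n : ℕ} {G : Type*} [Group G]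
    (A : G → Submodule K (UJ K n)) : Prop :=
  ∀ (i j : Fin n) (h : i ≤ j), ∃ g, Eu K i j h ∈ A g

/-- A family of components is of mirror type (MT) if every nonzero `Y⁺_{i:m}`, `Y⁻_{i:m}`
is homogeneous, and their degrees differ whenever both are nonzero. -/
def IsMTFam {K : Type*} [Field K] {n : ℕ} {G : Type*} [Group G]
    (A : G → Submodule K (UJ K n)) : Prop :=
  ∀ (i m : ℕ) (h : i + m < n),
    (Yp K i m h ≠ 0 → ∃ g, Yp K i m h ∈ A g) ∧
    (Ym K i m h ≠ 0 → ∃ g, Ym K i m h ∈ A g) ∧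
    (Yp K i m h ≠ 0 → Ym K i m h ≠ 0 →
      ∀ g g' : G, Yp K i m h ∈ A g → Ym K i m h ∈ A g' → g ≠ g')

/-- The degree of the matrix unit `e_{ij}` in the elementary grading defined by `η`:
`g_i g_{i+1} ⋯ g_{j-1}`. -/
def elemDeg {n : ℕ} (G : Type*) [CommGroup G] (η : Fin (n - 1) → G) (i j : Fin n) : G :=
  ∏ k ∈ (Finset.Ico (i : ℕ) (j : ℕ)).attach,
    η ⟨k.1, by have hk := Finset.mem_Ico.mp k.2; have hj := j.isLt; omega⟩

/-- The components of the elementary grading `(UJ_n, η)`. -/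
def elemComp (K : Type*) [Field K] {n : ℕ} {G : Type*} [CommGroup G]
    (η : Fin (n - 1) → G) (g : G) : Submodule K (UJ K n) :=
  Submodule.span K {x : UJ K n | ∃ (i j : Fin n) (h : i ≤ j), elemDeg G η i j = g ∧ x = Eu K i j h}

/-- The degree of `Y⁺_{i:m}` in the MT grading determined by `η ∈ G^{⌈(n-1)/2⌉}`. -/
def mtDeg {n : ℕ} (G : Type*) [CommGroup G] (η : Fin (n / 2) → G)
    (i m : ℕ) (h : i + m < n) : G :=
  ∏ k ∈ (Finset.range m).attach,
    η ⟨min (i + k.1) (n - 2 - (i + k.1)), by have hk := Finset.mem_range.mp k.2; omega⟩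

/-- The components of the MT grading `(UJ_n, t, η)`:
`deg Y⁺_{i:m}` is `mtDeg η i m` and `deg Y⁻_{i:m} = t ⬝ mtDeg η i m`. -/
def mtComp (K : Type*) [Field K] {n : ℕ} {G : Type*} [CommGroup G]
    (t : G) (η : Fin (n / 2) → G) (g : G) : Submodule K (UJ K n) :=
  Submodule.span K {x : UJ K n |
    (∃ (i m : ℕ) (h : i + m < n), mtDeg G η i m h = g ∧ x = Yp K i m h) ∨
    (∃ (i m : ℕ) (h : i + m < n), t * mtDeg G η i m h = g ∧ x = Ym K i m h)}

/-- The set `𝒯_m` of permutations that strictly decrease to the value `0` and then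
strictly increase. -/
def TT (m : ℕ) : Set (Equiv.Perm (Fin m)) :=
  {σ | ∃ t : Fin m, (σ t : ℕ) = 0 ∧
    (∀ a b : Fin m, a < b → b ≤ t → σ b < σ a) ∧
    (∀ a b : Fin m, t ≤ a → a < b → σ a < σ b)}

/-- The left-normed Jordan product of a list of elements (`0` for the empty list). -/
def jprod {K : Type*} [Field K] {n : ℕ} : List (UJ K n) → UJ K n
  | [] => 0
  | x :: xs => xs.foldl jmul x

/-- The `k`-th left-normed Jordan power `x ∘ x ∘ ⋯ ∘ x` (`k` factors, `0` for `k = 0`). -/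
def jpow {K : Type*} [Field K] {n : ℕ} (x : UJ K n) : ℕ → UJ K n
  | 0 => 0
  | 1 => x
  | (k + 2) => jmul (jpow x (k + 1)) x

section Aux
variable {K : Type*} [Field K] {n : ℕ}

theorem jmul_zero_left (y : UJ K n) : jmul 0 y = 0 := by
  apply Subtype.ext
  show (0 : UJ K n).1 * y.1 + y.1 * (0 : UJ K n).1 = ((0 : UJ K n) : Matrix (Fin n) (Fin n) K)
  simp

theorem jmul_zero_right (x : UJ K n) : jmul x 0 = 0 := by
  apply Subtype.ext
  show x.1 * (0 : UJ K n).1 + (0 : UJ K n).1 * x.1 = ((0 : UJ K n) : Matrix (Fin n) (Fin n) K)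
  simp

/-- total matrix unit: `0` out of range -/
def eu (K : Type*) [Field K] {n : ℕ} (i j : ℕ) : UJ K n :=
  if h : i < j ∧ j < n then
    Eu K ⟨i, h.1.trans h.2⟩ ⟨j, h.2⟩ (Fin.mk_le_mk.mpr h.1.le) else 0

theorem Eu_eq_eu {i j : Fin n} (h : i ≤ j) (hij : (i : ℕ) < (j : ℕ)) :
    Eu K i j h = eu K i j := by
  rw [eu, dif_pos (⟨hij, j.isLt⟩ : (i:ℕ) < (j:ℕ) ∧ (j:ℕ) < n)]

theorem eu_ne_zero {i j : ℕ} (hij : i < j) (hj : j < n) : (eu K i j : UJ K n) ≠ 0 := by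
  rw [eu, dif_pos ⟨hij, hj⟩]
  intro hEq
  have h1 := congrArg (fun x : UJ K n => x.1 ⟨i, hij.trans hj⟩ ⟨j, hj⟩) hEq
  simp only [Eu] at h1
  rw [Matrix.single_apply_same] at h1
  simp at h1

theorem std_mul (a b c d : Fin n) :
    Matrix.single a b (1 : K) * Matrix.single c d 1 =
      if b = c then Matrix.single a d 1 else 0 := by
  split_ifs with h
  · subst h
    rw [Matrix.single_mul_single_same, one_mul]
  · exact Matrix.single_mul_single_of_ne (h := h) ..

theorem eu_val {i j : ℕ} (hij : i < j) (hjn : j < n) :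
    ((eu K i j : UJ K n) : Matrix (Fin n) (Fin n) K) =
      Matrix.single ⟨i, hij.trans hjn⟩ ⟨j, hjn⟩ (1 : K) := by
  rw [eu, dif_pos ⟨hij, hjn⟩]; rfl

theorem jmul_val (x y : UJ K n) :
    ((jmul x y : UJ K n) : Matrix (Fin n) (Fin n) K) = x.1 * y.1 + y.1 * x.1 := rfl

theorem jmul_eu (a b c d : ℕ) (hab : a < b) (hbn : b < n) :
    jmul (eu K a b) (eu K c d) =
      (if d = a ∧ c < d then eu K c b
      else if c = b ∧ b < d then eu K a d
      else 0 : UJ K n) := by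
  have han : a < n := hab.trans hbn
  by_cases hv : c < d ∧ d < n
  · obtain ⟨hcd, hdn⟩ := hv
    have hcn : c < n := hcd.trans hdn
    by_cases h1 : d = a ∧ c < d
    · obtain ⟨rfl, -⟩ := h1
      rw [if_pos ⟨rfl, hcd⟩]
      apply Subtype.ext
      rw [jmul_val, eu_val hab hbn, eu_val hcd hdn, std_mul, std_mul,
        eu_val (hcd.trans hab) hbn]
      split_ifs with hx hy <;>
        simp_all only [Fin.mk.injEq] <;>
        first
          | rw [zero_add]
          | rw [add_zero]
          | omega
          | simp
    · rw [if_neg h1]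
      by_cases h2 : c = b ∧ b < d
      · obtain ⟨rfl, hbd⟩ := h2
        rw [if_pos ⟨rfl, hbd⟩]
        apply Subtype.ext
        rw [jmul_val, eu_val hab hbn, eu_val hcd hdn, std_mul, std_mul,
          eu_val (hab.trans hbd) hdn]
        split_ifs with hx hy <;>
          simp_all only [Fin.mk.injEq] <;>
          first
            | rw [zero_add]
            | rw [add_zero]
            | omega
            | simp
      · apply Subtype.ext
        rw [if_neg h2, jmul_val, eu_val hab hbn, eu_val hcd hdn, std_mul, std_mul]
        have hbc : b ≠ c := fun hh => h2 ⟨hh.symm, hh ▸ hcd⟩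
        have hda : d ≠ a := fun hh => h1 ⟨hh, hcd⟩
        split_ifs with hx hy <;>
          simp_all only [Fin.mk.injEq] <;>
          simp
  · have h0 : (eu K c d : UJ K n) = 0 := dif_neg hv
    rw [h0, jmul_zero_right]
    split_ifs with h1 h2
    · exact absurd ⟨h1.2, h1.1 ▸ han⟩ hv
    · have hne : ¬ (a < d ∧ d < n) := fun hh => hv ⟨h2.1 ▸ h2.2, hh.2⟩
      rw [eu, dif_neg hne]
    · rfl

def extP (n : ℕ) : ℕ → ℕ → List (ℕ × ℕ) → Option (ℕ × ℕ)
  | a, b, [] => some (a, b)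
  | a, b, p :: l =>
      if p.2 = a ∧ p.1 < p.2 then extP n p.1 b l
      else if p.1 = b ∧ b < p.2 ∧ p.2 < n then extP n a p.2 l
      else none

theorem foldl_jmul_zero (l : List (ℕ × ℕ)) :
    l.foldl (fun x p => jmul x (eu K p.1 p.2)) (0 : UJ K n) = 0 := by
  induction l with
  | nil => rfl
  | cons p l ih => rw [List.foldl_cons, jmul_zero_left]; exact ih

theorem foldl_eu : ∀ (l : List (ℕ × ℕ)) (a b : ℕ), a < b → b < n →
    l.foldl (fun x p => jmul x (eu K p.1 p.2)) (eu K a b) =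
      (extP n a b l).elim (0 : UJ K n) (fun p => eu K p.1 p.2)
  | [], a, b, hab, hbn => by simp [extP]
  | p :: l, a, b, hab, hbn => by
    rw [List.foldl_cons]
    show List.foldl _ (jmul (eu K a b) (eu K p.1 p.2)) l = _
    rw [jmul_eu a b p.1 p.2 hab hbn]
    by_cases h1 : p.2 = a ∧ p.1 < p.2
    · rw [if_pos h1,
        foldl_eu l p.1 b (lt_trans (h1.1 ▸ h1.2) hab) hbn]
      simp only [extP, if_pos h1]
    · rw [if_neg h1]
      by_cases h2 : p.1 = b ∧ b < p.2
      · by_cases hdn : p.2 < n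
        · rw [if_pos h2, foldl_eu l a p.2 (hab.trans h2.2) hdn]
          have h2' : p.1 = b ∧ b < p.2 ∧ p.2 < n := ⟨h2.1, h2.2, hdn⟩
          simp only [extP, if_neg h1, if_pos h2']
        · rw [if_pos h2]
          have h0 : (eu K a p.2 : UJ K n) = 0 := dif_neg (fun hh => hdn hh.2)
          rw [h0, foldl_jmul_zero]
          have : ¬ (p.1 = b ∧ b < p.2 ∧ p.2 < n) := fun hh => hdn hh.2.2
          simp only [extP, if_neg h1, if_neg this, Option.elim]
      · rw [if_neg h2, foldl_jmul_zero]
        have : ¬ (p.1 = b ∧ b < p.2 ∧ p.2 < n) := fun hh => h2 ⟨hh.1, hh.2.1⟩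
        simp only [extP, if_neg h1, if_neg this, Option.elim]

theorem extP_append : ∀ (l1 l2 : List (ℕ × ℕ)) (a b : ℕ),
    extP n a b (l1 ++ l2) = (extP n a b l1).elim none (fun p => extP n p.1 p.2 l2)
  | [], l2, a, b => by simp [extP]
  | p :: l1, l2, a, b => by
    simp only [List.cons_append, extP]
    split_ifs with h1 h2
    · exact extP_append l1 l2 p.1 b
    · exact extP_append l1 l2 a p.2
    · rfl

theorem extP_spec : ∀ (l : List (ℕ × ℕ)) (a b a' b' : ℕ), a < b → b < n →
    extP n a b l = some (a', b') →
    a' ≤ a ∧ b ≤ b' ∧ b' < n ∧ b' - a' = (b - a) + (l.map fun p => p.2 - p.1).sum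
  | [], a, b, a', b', hab, hbn, h => by
    simp only [extP, Option.some.injEq, Prod.mk.injEq] at h
    obtain ⟨rfl, rfl⟩ := h
    exact ⟨le_rfl, le_rfl, hbn, by simp⟩
  | p :: l, a, b, a', b', hab, hbn, h => by
    simp only [extP] at h
    split_ifs at h with h1 h2
    · obtain ⟨ha, hb, hbn', hsum⟩ :=
        extP_spec l p.1 b a' b' (lt_trans (h1.1 ▸ h1.2) hab) hbn h
      refine ⟨le_trans ha (le_of_lt (h1.1 ▸ h1.2)), hb, hbn', ?_⟩
      obtain ⟨hx1, hx2⟩ := h1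
      simp only [List.map_cons, List.sum_cons]
      omega
    · obtain ⟨ha, hb, hbn', hsum⟩ :=
        extP_spec l a p.2 a' b' (hab.trans h2.2.1) h2.2.2 h
      refine ⟨ha, le_trans (le_of_lt h2.2.1) hb, hbn', ?_⟩
      obtain ⟨hx1, hx2, hx3⟩ := h2
      simp only [List.map_cons, List.sum_cons]
      omega

theorem extP_order : ∀ (l : List ℕ) (a b : ℕ), a < b →
    (extP n a b (l.map fun c => (c, c + 1))).isSome = true →
    ∀ i (hi : i < l.length),
      (l[i]'hi + 1 ≤ a ∧ ∀ j (hj : j < i), l[i]'hi < l[j]'(hj.trans hi)) ∨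
      (b ≤ l[i]'hi ∧ ∀ j (hj : j < i), l[j]'(hj.trans hi) < l[i]'hi)
  | [], a, b, hab, hs, i, hi => absurd hi (by simp)
  | c :: l, a, b, hab, hs, i, hi => by
    simp only [List.map_cons, extP] at hs
    split_ifs at hs with h1 h2
    · have hca : c + 1 = a := h1.1
      have IH := extP_order l c b (by omega) hs
      cases i with
      | zero =>
        exact Or.inl ⟨by simpa using (by omega : c + 1 ≤ a),
          fun j hj => absurd hj (Nat.not_lt_zero j)⟩
      | succ i =>
        have hi' : i < l.length := by simpa using hi
        rcases IH i hi' with ⟨hA, hB⟩ | ⟨hA, hB⟩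
        · left
          simp only [List.getElem_cons_succ]
          refine ⟨by omega, fun j hj => ?_⟩
          cases j with
          | zero => simp only [List.getElem_cons_zero]; omega
          | succ j => simp only [List.getElem_cons_succ]; exact hB j (by omega)
        · right
          simp only [List.getElem_cons_succ]
          refine ⟨by omega, fun j hj => ?_⟩
          cases j with
          | zero => simp only [List.getElem_cons_zero]; omega
          | succ j => simp only [List.getElem_cons_succ]; exact hB j (by omega)
    · have hcb : c = b := h2.1
      have hcn : c + 1 < n := h2.2.2
      have IH := extP_order l a (c + 1) (by omega) hs
      cases i with
      | zero =>
        exact Or.inr ⟨by simpa using (by omega : b ≤ c),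
          fun j hj => absurd hj (Nat.not_lt_zero j)⟩
      | succ i =>
        have hi' : i < l.length := by simpa using hi
        rcases IH i hi' with ⟨hA, hB⟩ | ⟨hA, hB⟩
        · left
          simp only [List.getElem_cons_succ]
          refine ⟨hA, fun j hj => ?_⟩
          cases j with
          | zero => simp only [List.getElem_cons_zero]; omega
          | succ j => simp only [List.getElem_cons_succ]; exact hB j (by omega)
        · right
          simp only [List.getElem_cons_succ]
          refine ⟨by omega, fun j hj => ?_⟩
          cases j with
          | zero => simp only [List.getElem_cons_zero]; omega
          | succ j => simp only [List.getElem_cons_succ]; exact hB j (by omega)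
    · simp at hs

theorem extP_singleton (a b c d : ℕ) :
    extP n a b [(c, d)] =
      if d = a ∧ c < d then some (c, b)
      else if c = b ∧ b < d ∧ d < n then some (a, d)
      else none := rfl

theorem extP_backward (m : ℕ) (hmn : m + 2 ≤ n) (S : ℕ → ℕ)
    (hle : ∀ k, k ≤ m → S k ≤ m)
    (hinj : ∀ k l, k ≤ m → l ≤ m → S k = S l → k = l)
    (hsurj : ∀ x, x ≤ m → ∃ k, k ≤ m ∧ S k = x)
    (hLR : ∀ l, l ≤ m → 0 < l →
      (∀ k', k' < l → S l < S k') ∨ (∀ k', k' < l → S k' < S l)) :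
    ∀ p, p ≤ m → ∃ a b, extP n (S 0) (S 0 + 1)
        (List.ofFn fun i : Fin p => (S (↑i + 1), S (↑i + 1) + 1)) = some (a, b) ∧
      ∀ x, (a ≤ x ∧ x < b) ↔ ∃ j, j ≤ p ∧ S j = x := by
  intro p
  induction p with
  | zero =>
    intro _
    refine ⟨S 0, S 0 + 1, by simp [extP], fun x => ?_⟩
    constructor
    · rintro ⟨h1, h2⟩
      exact ⟨0, le_rfl, by omega⟩
    · rintro ⟨j, hj, rfl⟩
      have : j = 0 := by omega
      subst this
      omega
  | succ p IH =>
    intro hp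
    obtain ⟨a, b, hE, hiff⟩ := IH (by omega)
    have hS0 : a ≤ S 0 ∧ S 0 < b := (hiff (S 0)).mpr ⟨0, by omega, rfl⟩
    have hS0m : S 0 ≤ m := hle 0 (by omega)
    have hbub : b ≤ m + 1 := by
      obtain ⟨j, hj, hjx⟩ := (hiff (b - 1)).mp ⟨by omega, by omega⟩
      have := hle j (by omega)
      omega
    set c := S (p + 1) with hc
    have hcm : c ≤ m := hle (p + 1) hp
    have hLRp := hLR (p + 1) hp (by omega)
    have hstep : c + 1 = a ∨ c = b := by
      rcases hLRp with hlo | hhi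
      · have hca : c < a := by
          obtain ⟨j, hj, hjx⟩ := (hiff a).mp ⟨le_rfl, by omega⟩
          have := hlo j (by omega)
          omega
        left
        by_contra hne
        obtain ⟨j, hj, hjx⟩ := hsurj (a - 1) (by omega)
        rcases lt_trichotomy j (p + 1) with hlt | heq | hgt
        · have := (hiff (a - 1)).mpr ⟨j, by omega, hjx⟩
          omega
        · subst heq
          omega
        · rcases hLR j (by omega) (by omega) with h' | h'
          · have := h' (p + 1) (by omega)
            omega
          · have := h' 0 (by omega)
            have := (hiff (S 0)).mpr ⟨0, by omega, rfl⟩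
            omega
      · have hcb : b ≤ c := by
          obtain ⟨j, hj, hjx⟩ := (hiff (b - 1)).mp ⟨by omega, by omega⟩
          have := hhi j (by omega)
          omega
        right
        by_contra hne
        have hbm : b ≤ m := by omega
        obtain ⟨j, hj, hjx⟩ := hsurj b hbm
        rcases lt_trichotomy j (p + 1) with hlt | heq | hgt
        · have := (hiff b).mpr ⟨j, by omega, hjx⟩
          omega
        · subst heq
          omega
        · rcases hLR j (by omega) (by omega) with h' | h'
          · have := h' 0 (by omega)
            omega
          · have := h' (p + 1) (by omega)
            omega
    have hlist : (List.ofFn fun i : Fin (p + 1) => (S (↑i + 1), S (↑i + 1) + 1)) =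
        (List.ofFn fun i : Fin p => (S (↑i + 1), S (↑i + 1) + 1)) ++ [(c, c + 1)] := by
      rw [List.ofFn_succ']
      simp [Fin.coe_castSucc, Fin.val_last, List.concat_eq_append]
      rfl
    rw [hlist]
    rcases hstep with hL | hR
    · refine ⟨c, b, ?_, fun x => ?_⟩
      · rw [extP_append, hE]
        show extP n a b [(c, c + 1)] = some (c, b)
        rw [extP_singleton]
        have hcond : c + 1 = a ∧ c < c + 1 := ⟨hL, by omega⟩
        rw [if_pos hcond]
      · constructor
        · rintro ⟨h1, h2⟩
          by_cases hx : x = c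
          · exact ⟨p + 1, le_rfl, by omega⟩
          · obtain ⟨j, hj, hjx⟩ := (hiff x).mp ⟨by omega, h2⟩
            exact ⟨j, by omega, hjx⟩
        · rintro ⟨j, hj, rfl⟩
          by_cases hj' : j ≤ p
          · have := (hiff (S j)).mpr ⟨j, hj', rfl⟩
            omega
          · have : j = p + 1 := by omega
            subst this
            omega
    · refine ⟨a, c + 1, ?_, fun x => ?_⟩
      · rw [extP_append, hE]
        show extP n a b [(c, c + 1)] = some (a, c + 1)
        rw [extP_singleton]
        have hcond1 : ¬ (c + 1 = a ∧ c < c + 1) := by omega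
        have hcond2 : c = b ∧ b < c + 1 ∧ c + 1 < n := ⟨hR, by omega, by omega⟩
        rw [if_neg hcond1, if_pos hcond2]
      · constructor
        · rintro ⟨h1, h2⟩
          by_cases hx : x = c
          · exact ⟨p + 1, le_rfl, by omega⟩
          · obtain ⟨j, hj, hjx⟩ := (hiff x).mp ⟨h1, by omega⟩
            exact ⟨j, by omega, hjx⟩
        · rintro ⟨j, hj, rfl⟩
          by_cases hj' : j ≤ p
          · have := (hiff (S j)).mpr ⟨j, hj', rfl⟩
            omega
          · have : j = p + 1 := by omega
            subst this
            omega

theorem jprod_eq {m : ℕ} (c d : Fin (m + 1) → ℕ)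
    (h0 : c 0 < d 0) (h0n : d 0 < n) :
    jprod (List.ofFn fun k => (eu K (c k) (d k) : UJ K n)) =
      (extP n (c 0) (d 0) (List.ofFn fun i : Fin m => (c i.succ, d i.succ))).elim
        (0 : UJ K n) (fun p => eu K p.1 p.2) := by
  rw [List.ofFn_succ]
  show (List.ofFn fun i : Fin m => (eu K (c i.succ) (d i.succ) : UJ K n)).foldl jmul
      (eu K (c 0) (d 0)) = _
  have hmap : (List.ofFn fun i : Fin m => (eu K (c i.succ) (d i.succ) : UJ K n)) =
      (List.ofFn fun i : Fin m => (c i.succ, d i.succ)).map (fun p => eu K p.1 p.2) := by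
    rw [List.map_ofFn]; rfl
  rw [hmap, List.foldl_map]
  exact foldl_eu _ _ _ h0 h0n
end Aux

theorem elemDeg_unit {n : ℕ} (G : Type*) [CommGroup G] (η : Fin (n - 1) → G)
    (i j : Fin n) (hj : (j : ℕ) = (i : ℕ) + 1) :
    elemDeg G η i j = η ⟨(i : ℕ), by have := j.isLt; omega⟩ := by
  have hin : (i : ℕ) < n - 1 := by have := j.isLt; omega
  set F : ℕ → G := fun x => if h : x < n - 1 then η ⟨x, h⟩ else 1 with hF
  have h1 : elemDeg G η i j = ∏ k ∈ (Finset.Ico (i : ℕ) (j : ℕ)).attach, F k.1 := by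
    rw [elemDeg]
    refine Finset.prod_congr rfl (fun k _ => ?_)
    have hk := Finset.mem_Ico.mp k.2
    have hkn : k.1 < n - 1 := by have := j.isLt; omega
    simp only [hF]
    rw [dif_pos hkn]
  have hs : Finset.Ico (i : ℕ) (j : ℕ) = {(i : ℕ)} := by
    rw [hj]; exact Nat.Ico_succ_singleton _
  rw [h1, Finset.prod_attach, hs, Finset.prod_singleton]
  simp only [hF]
  exact dif_pos hin

theorem core {K : Type*} [Field K] {m : ℕ} {G : Type*} [CommGroup G]
    (η μ : Fin (m + 1) → G) :
    (∃ r : Fin (m + 1) → UJ K (m + 2),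
      (∀ k : Fin (m + 1), ∃ (i j : Fin (m + 2)) (hij : i < j),
        r k = Eu K i j hij.le ∧ elemDeg G η i j = μ k) ∧
      jprod (List.ofFn r) ≠ 0) ↔
    (∃ σ : Equiv.Perm (Fin (m + 1)), σ ∈ TT (m + 1) ∧ μ = fun k => η (σ⁻¹ k)) := by
  constructor
  · rintro ⟨r, hr, hne⟩
    choose I J hIJ hrEu hdeg using hr
    set c : Fin (m + 1) → ℕ := fun k => (I k : ℕ) with hcdef
    set d : Fin (m + 1) → ℕ := fun k => (J k : ℕ) with hddef
    have hcd : ∀ k, c k < d k := fun k => hIJ k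
    have hdn : ∀ k, d k < m + 2 := fun k => (J k).isLt
    have hofn : List.ofFn r = List.ofFn fun k => (eu K (c k) (d k) : UJ K (m + 2)) := by
      congr 1
      funext k
      rw [hrEu k, Eu_eq_eu _ (hIJ k)]
    rw [hofn, jprod_eq c d (hcd 0) (hdn 0)] at hne
    set L := List.ofFn fun i : Fin m => (c i.succ, d i.succ) with hL
    rcases hE : extP (m + 2) (c 0) (d 0) L with - | ⟨a', b'⟩
    · rw [hE] at hne
      exact absurd rfl hne
    · rw [hE] at hne
      obtain ⟨ha, hb, hbn, hsum⟩ := extP_spec L (c 0) (d 0) a' b' (hcd 0) (hdn 0) hE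
      have hmapsum : (L.map fun p => p.2 - p.1).sum = ∑ i : Fin m, (d i.succ - c i.succ) := by
        rw [hL, List.map_ofFn, List.sum_ofFn]
        rfl
      have hsum2 : ∑ k : Fin (m + 1), (d k - c k) = b' - a' := by
        have h := Fin.sum_univ_succ (fun k => d k - c k)
        omega
      have hone : ∀ k : Fin (m + 1), d k = c k + 1 := by
        intro k
        by_contra hk
        have h1 : ∀ j : Fin (m + 1), 1 ≤ d j - c j := fun j => by have := hcd j; omega
        have h4 : (d k - c k) + ∑ j ∈ Finset.univ.erase k, (d j - c j)
            = ∑ j : Fin (m + 1), (d j - c j) :=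
          Finset.add_sum_erase Finset.univ (fun j => d j - c j) (Finset.mem_univ k)
        have h5 : (Finset.univ.erase k).card • 1 ≤ ∑ j ∈ Finset.univ.erase k, (d j - c j) :=
          Finset.card_nsmul_le_sum _ _ _ (fun j _ => h1 j)
        have h6 : (Finset.univ.erase k).card = m := by
          rw [Finset.card_erase_of_mem (Finset.mem_univ k)]
          simp
        simp only [smul_eq_mul, mul_one] at h5
        have h2 : 2 ≤ d k - c k := by have := hcd k; omega
        omega
      have hSb : ∀ k : Fin (m + 1), c k ≤ m := fun k => by
        have := hdn k; have := hone k; omega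
      have hLunit : L = (List.ofFn fun i : Fin m => c i.succ).map (fun x => (x, x + 1)) := by
        rw [hL, List.map_ofFn]
        congr 1
        funext i
        show (c i.succ, d i.succ) = (c i.succ, c i.succ + 1)
        rw [hone i.succ]
      have hd0 : d 0 = c 0 + 1 := hone 0
      have hOrd := extP_order (List.ofFn fun i : Fin m => c i.succ) (c 0) (d 0) (hcd 0)
        (by rw [← hLunit, hE]; rfl)
      have P : ∀ p q : Fin (m + 1), p < q →
          (c q < c p ∧ c q < c 0) ∨ (c p < c q ∧ c 0 < c q) := by
        intro p q hpq
        have hq0 : 0 < (q : ℕ) := lt_of_le_of_lt (Nat.zero_le _) hpq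
        have hq1 : (q : ℕ) - 1 < m := by have := q.isLt; omega
        have hOq := hOrd ((q : ℕ) - 1) (by simpa using hq1)
        simp only [List.getElem_ofFn] at hOq
        have hqs : ((⟨(q : ℕ) - 1, by simpa using hq1⟩ : Fin m)).succ = q := by
          apply Fin.ext
          simp [Fin.val_succ]
          omega
        rw [hqs] at hOq
        by_cases hp0 : (p : ℕ) = 0
        · have hp : p = 0 := Fin.ext (by simp [hp0])
          subst hp
          rcases hOq with ⟨hA, -⟩ | ⟨hA, -⟩
          · exact Or.inl ⟨by omega, by omega⟩
          · exact Or.inr ⟨by omega, by omega⟩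
        · have hp1 : (p : ℕ) - 1 < (q : ℕ) - 1 := by
            have : (p : ℕ) < (q : ℕ) := hpq
            omega
          have hps : ((⟨(p : ℕ) - 1, by omega⟩ : Fin m)).succ = p := by
            apply Fin.ext
            simp [Fin.val_succ]
            omega
          rcases hOq with ⟨hA, hB⟩ | ⟨hA, hB⟩
          · have := hB ((p : ℕ) - 1) hp1
            rw [hps] at this
            exact Or.inl ⟨this, by omega⟩
          · have := hB ((p : ℕ) - 1) hp1
            rw [hps] at this
            exact Or.inr ⟨this, by omega⟩
      have hcinj : ∀ p q : Fin (m + 1), c p = c q → p = q := by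
        intro p q hpq
        rcases lt_trichotomy p q with h | h | h
        · rcases P p q h with ⟨h1, -⟩ | ⟨h1, -⟩ <;> omega
        · exact h
        · rcases P q p h with ⟨h1, -⟩ | ⟨h1, -⟩ <;> omega
      set s : Fin (m + 1) → Fin (m + 1) := fun k => ⟨c k, by have := hSb k; omega⟩ with hs
      have hsinj : Function.Injective s := by
        intro p q h
        have h2 := congrArg Fin.val h
        exact hcinj p q h2
      have hsbij := Finite.injective_iff_bijective.mp hsinj
      set e : Equiv.Perm (Fin (m + 1)) := Equiv.ofBijective s hsbij with he
      have heapp : ∀ k, e k = s k := fun k => rfl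
      have hcs : ∀ p : Fin (m + 1), c (e.symm p) = (p : ℕ) := by
        intro p
        have := e.apply_symm_apply p
        rw [heapp] at this
        exact congrArg Fin.val this
      refine ⟨e.symm, ⟨s 0, ?_, ?_, ?_⟩, ?_⟩
      · show ((e.symm (s 0) : Fin (m + 1)) : ℕ) = 0
        have h0 : e.symm (e 0) = 0 := e.symm_apply_apply 0
        rw [heapp] at h0
        rw [h0]
        simp
      · intro x y hxy hyt
        have hcx := hcs x
        have hcy := hcs y
        have hne' : e.symm x ≠ e.symm y := fun h =>
          (ne_of_lt hxy) (Fin.ext (by rw [← hcx, ← hcy, h]))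
        have hxy' : (x : ℕ) < (y : ℕ) := hxy
        have hyt' : (y : ℕ) ≤ c 0 := hyt
        rcases lt_trichotomy (e.symm x) (e.symm y) with h | h | h
        · exfalso
          rcases P (e.symm x) (e.symm y) h with ⟨h1, h2⟩ | ⟨h1, h2⟩ <;> omega
        · exact absurd h hne'
        · exact h
      · intro x y htx hxy
        have hcx := hcs x
        have hcy := hcs y
        have hne' : e.symm x ≠ e.symm y := fun h =>
          (ne_of_lt hxy) (Fin.ext (by rw [← hcx, ← hcy, h]))
        have hxy' : (x : ℕ) < (y : ℕ) := hxy
        have htx' : c 0 ≤ (x : ℕ) := htx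
        rcases lt_trichotomy (e.symm x) (e.symm y) with h | h | h
        · exact h
        · exact absurd h hne'
        · exfalso
          rcases P (e.symm y) (e.symm x) h with ⟨h1, h2⟩ | ⟨h1, h2⟩ <;> omega
      · funext k
        rw [← hdeg k, elemDeg_unit G η (I k) (J k) (hone k)]
        have hinv : (e.symm)⁻¹ k = s k := by
          rw [Equiv.Perm.inv_def, Equiv.symm_symm]
          exact heapp k
        rw [hinv]
  · rintro ⟨σ, ⟨t, ht0, hdec, hinc⟩, hμ⟩
    subst hμ
    have ht0' : σ t = 0 := Fin.ext (by simpa using ht0)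
    set S : ℕ → ℕ := fun x =>
      if h : x < m + 1 then ((σ⁻¹ ⟨x, h⟩ : Fin (m + 1)) : ℕ) else 0 with hS
    have hSdef : ∀ k : Fin (m + 1), S (k : ℕ) = ((σ⁻¹ k : Fin (m + 1)) : ℕ) := by
      intro k
      simp only [hS, dif_pos k.isLt, Fin.eta]
    have hSlt : ∀ k : Fin (m + 1), S (k : ℕ) < m + 1 := by
      intro k
      rw [hSdef k]
      exact (σ⁻¹ k).isLt
    have hle : ∀ k, k ≤ m → S k ≤ m := by
      intro k hk
      have h1 := hSlt ⟨k, by omega⟩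
      simp only [Fin.val_mk] at h1
      omega
    have hinj : ∀ k l, k ≤ m → l ≤ m → S k = S l → k = l := by
      intro k l hk hl hkl
      have h1 := hSdef ⟨k, by omega⟩
      have h2 := hSdef ⟨l, by omega⟩
      simp only [Fin.val_mk] at h1 h2
      have h3 : (σ⁻¹ (⟨k, by omega⟩ : Fin (m + 1)) : Fin (m + 1))
          = σ⁻¹ (⟨l, by omega⟩ : Fin (m + 1)) := Fin.ext (by omega)
      have h4 := (σ⁻¹ : Equiv.Perm (Fin (m + 1))).injective h3
      simpa using congrArg Fin.val h4
    have hsurj : ∀ x, x ≤ m → ∃ k, k ≤ m ∧ S k = x := by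
      intro x hx
      refine ⟨((σ ⟨x, by omega⟩ : Fin (m + 1)) : ℕ), by have := (σ ⟨x, by omega⟩).isLt; omega, ?_⟩
      have h1 := hSdef (σ ⟨x, by omega⟩)
      rw [h1]
      simp
    have hLR : ∀ l, l ≤ m → 0 < l →
        (∀ k', k' < l → S l < S k') ∨ (∀ k', k' < l → S k' < S l) := by
      intro l hl hl0
      set vl : Fin (m + 1) := σ⁻¹ ⟨l, by omega⟩ with hvl
      have hvlS : S l = (vl : ℕ) := by
        have := hSdef ⟨l, by omega⟩
        exact this
      rcases lt_trichotomy (vl : ℕ) (t : ℕ) with hlt | heq | hgt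
      · left
        intro k' hk'
        set vk : Fin (m + 1) := σ⁻¹ ⟨k', by omega⟩ with hvk
        have hvkS : S k' = (vk : ℕ) := by
          have := hSdef ⟨k', by omega⟩
          exact this
        rw [hvlS, hvkS]
        by_contra hcon
        push_neg at hcon
        have hne : vk ≠ vl := by
          intro h
          have h4 := (σ⁻¹ : Equiv.Perm (Fin (m + 1))).injective
            (show σ⁻¹ (⟨k', by omega⟩ : Fin (m + 1)) = σ⁻¹ ⟨l, by omega⟩ from by
              rw [← hvk, ← hvl]; exact h)
          have h5 : k' = l := by simpa only [Fin.mk.injEq] using h4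
          omega
        have hlt2 : vk < vl := Fin.lt_def.mpr
          (lt_of_le_of_ne hcon (fun h => hne (Fin.ext h)))
        have hd := hdec vk vl hlt2 (Fin.le_def.mpr (le_of_lt hlt))
        rw [hvk, hvl, (show ∀ x, σ (σ⁻¹ x) = x from σ.apply_symm_apply), (show ∀ x, σ (σ⁻¹ x) = x from σ.apply_symm_apply)] at hd
        have : l < k' := hd
        omega
      · exfalso
        have hveq : vl = t := Fin.ext heq
        have h2 : σ vl = σ t := congrArg σ hveq
        rw [hvl, (show ∀ x, σ (σ⁻¹ x) = x from σ.apply_symm_apply), ht0'] at h2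
        have : l = 0 := by simpa using congrArg Fin.val h2
        omega
      · right
        intro k' hk'
        set vk : Fin (m + 1) := σ⁻¹ ⟨k', by omega⟩ with hvk
        have hvkS : S k' = (vk : ℕ) := by
          have := hSdef ⟨k', by omega⟩
          exact this
        rw [hvlS, hvkS]
        by_contra hcon
        push_neg at hcon
        have hne : vl ≠ vk := by
          intro h
          have h4 := (σ⁻¹ : Equiv.Perm (Fin (m + 1))).injective
            (show σ⁻¹ (⟨l, by omega⟩ : Fin (m + 1)) = σ⁻¹ ⟨k', by omega⟩ from by
              rw [← hvk, ← hvl]; exact h)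
          have h5 : l = k' := by simpa only [Fin.mk.injEq] using h4
          omega
        have hlt2 : vl < vk := Fin.lt_def.mpr
          (lt_of_le_of_ne hcon (fun h => hne (Fin.ext h)))
        have hd := hinc vl vk (Fin.le_def.mpr (le_of_lt hgt)) hlt2
        rw [hvk, hvl, (show ∀ x, σ (σ⁻¹ x) = x from σ.apply_symm_apply), (show ∀ x, σ (σ⁻¹ x) = x from σ.apply_symm_apply)] at hd
        have : l < k' := hd
        omega
    obtain ⟨a, b, hE, hiff⟩ := extP_backward m le_rfl S hle hinj hsurj hLR m le_rfl
    refine ⟨fun k => eu K (S (k : ℕ)) (S (k : ℕ) + 1), ?_, ?_⟩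
    · intro k
      have h1 : S (k : ℕ) < m + 1 := hSlt k
      refine ⟨⟨S (k : ℕ), by omega⟩, ⟨S (k : ℕ) + 1, by omega⟩,
        Fin.mk_lt_mk.mpr (Nat.lt_succ_self _), ?_, ?_⟩
      · exact (Eu_eq_eu (K := K) (i := ⟨S (k : ℕ), by omega⟩) (j := ⟨S (k : ℕ) + 1, by omega⟩)
          (le_of_lt (Fin.mk_lt_mk.mpr (Nat.lt_succ_self _))) (Nat.lt_succ_self _)).symm
      · have hu := elemDeg_unit (n := m + 2) G η ⟨S (k : ℕ), by omega⟩
          ⟨S (k : ℕ) + 1, by omega⟩ rfl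
        rw [hu]
        show η ⟨S (k : ℕ), by omega⟩ = η (σ⁻¹ k)
        exact congrArg η (Fin.ext (by simpa using hSdef k))
    · intro h0
      have hj := jprod_eq (n := m + 2) (K := K) (fun k : Fin (m + 1) => S (k : ℕ))
        (fun k : Fin (m + 1) => S (k : ℕ) + 1) (Nat.lt_succ_self _) (Nat.succ_lt_succ (hSlt 0))
      rw [hj] at h0
      have hlist : (List.ofFn fun i : Fin m => (S ((i.succ : Fin (m + 1)) : ℕ),
          S ((i.succ : Fin (m + 1)) : ℕ) + 1))
          = (List.ofFn fun i : Fin m => (S ((i : ℕ) + 1), S ((i : ℕ) + 1) + 1)) :=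
        congrArg List.ofFn (funext fun i => by rw [Fin.val_succ])
      rw [hlist] at h0
      simp only [Fin.val_zero] at h0
      rw [hE] at h0
      have hS0ab := (hiff (S 0)).mpr ⟨0, by omega, rfl⟩
      have hbm : b ≤ m + 1 := by
        obtain ⟨j, hj2, hj3⟩ := (hiff (b - 1)).mp ⟨by omega, by omega⟩
        have := hle j hj2
        omega
      exact eu_ne_zero (by omega) (by omega) h0

/-- A sequence `μ ∈ G^{n−1}` is Jordan `η`-good for the elementary grading `(UJ_n, η)`
iff `μ = ση` for some `σ ∈ 𝒯_{n−1}`. -/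
theorem statement_9 {K : Type*} [Field K] (h2 : (2 : K) ≠ 0)
    {n : ℕ} (hn : 2 ≤ n) {G : Type*} [CommGroup G] (η μ : Fin (n - 1) → G) :
    (∃ r : Fin (n - 1) → UJ K n,
      (∀ k : Fin (n - 1), ∃ (i j : Fin n) (hij : i < j),
        r k = Eu K i j hij.le ∧ elemDeg G η i j = μ k) ∧
      jprod (List.ofFn r) ≠ 0) ↔
    (∃ σ : Equiv.Perm (Fin (n - 1)), σ ∈ TT (n - 1) ∧ μ = fun k => η (σ⁻¹ k)) := by
  obtain ⟨m, rfl⟩ : ∃ m, n = m + 2 := ⟨n - 2, by omega⟩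
  exact core η μ
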